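/- If X is a real-valued random variable with E[X] = 0 and E[X^2] = 1, then for every s ∈ ℝ, ∫_{-∞}^{s} E[X · 1{X > t}] dt = E[X(X - s) · 1{X ≤ s}]. -/

import Mathlib

open MeasureTheory

lemma helper_val (s c v : ℝ) :
    ∫ t in Set.Iic s, (if c ≤ t then v else 0) = v * max (s - c) 0 := by
  have h1 : (fun t : ℝ => if c ≤ t then v else 0) = (Set.Ici c).indicator (fun _ => v) := by
    ext t; by_cases h : c ≤ t <;> simp [Set.indicator, h]
  rw [h1, setIntegral_indicator measurableSet_Ici, setIntegral_const]
  have h2 : Set.Iic s ∩ Set.Ici c = Set.Icc c s := by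
    rw [Set.inter_comm, Set.Ici_inter_Iic]
  rw [h2, Measure.real, Real.volume_Icc]
  rcases le_total c s with h | h
  · rw [ENNReal.toReal_ofReal (by linarith), smul_eq_mul, max_eq_left (by linarith)]; ring
  · rw [ENNReal.ofReal_eq_zero.2 (by linarith), max_eq_right (by linarith)]; simp

theorem stmt_2 {Ω : Type*} [MeasurableSpace Ω] (μ : Measure Ω) [IsProbabilityMeasure μ]
    (X : Ω → ℝ) (hXmeas : Measurable X)
    (hX1 : Integrable X μ) (hX2 : Integrable (fun ω => (X ω) ^ 2) μ)
    (hmean : ∫ ω, X ω ∂μ = 0) (hvar : ∫ ω, (X ω) ^ 2 ∂μ = 1) (s : ℝ) :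
    ∫ t in Set.Iic s, (∫ ω, (if t < X ω then X ω else 0) ∂μ)
      = ∫ ω, (if X ω ≤ s then X ω * (X ω - s) else 0) ∂μ := by
  set ν : Measure ℝ := volume.restrict (Set.Iic s) with hν
  have hA : ∀ t : ℝ, (∫ ω, (if t < X ω then X ω else 0) ∂μ)
      = -∫ ω, (if X ω ≤ t then X ω else 0) ∂μ := by
    intro t
    have h1 : Integrable (fun ω => if t < X ω then X ω else 0) μ := by
      have := hX1.indicator (hXmeas (measurableSet_Ioi (a := t)))
      exact this.congr (Filter.Eventually.of_forall fun ω => by by_cases h : t < X ω <;> simp [Set.indicator, h])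
    have h2 : Integrable (fun ω => if X ω ≤ t then X ω else 0) μ := by
      have := hX1.indicator (hXmeas (measurableSet_Iic (a := t)))
      exact this.congr (Filter.Eventually.of_forall fun ω => by by_cases h : X ω ≤ t <;> simp [Set.indicator, h])
    have key : (∫ ω, (if t < X ω then X ω else 0) ∂μ)
        + (∫ ω, (if X ω ≤ t then X ω else 0) ∂μ) = 0 := by
      rw [← integral_add h1 h2]
      have heq : ∀ ω, (if t < X ω then X ω else 0) + (if X ω ≤ t then X ω else 0) = X ω := by
        intro ω
        by_cases h : t < X ω
        · simp [h, not_le.2 h]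
        · simp [h, not_lt.1 h]
      simp_rw [heq]
      exact hmean
    linarith
  simp_rw [hA]
  rw [integral_neg]
  have hFmeas : Measurable (fun p : ℝ × Ω => if X p.2 ≤ p.1 then X p.2 else 0) :=
    Measurable.ite (measurableSet_le (hXmeas.comp measurable_snd) measurable_fst)
      (hXmeas.comp measurable_snd) measurable_const
  have hInt : Integrable (fun p : ℝ × Ω => if X p.2 ≤ p.1 then X p.2 else 0) (ν.prod μ) := by
    rw [integrable_prod_iff' (hFmeas.aestronglyMeasurable)]
    constructor
    · filter_upwards with ω
      have h1 : (fun t : ℝ => if X ω ≤ t then X ω else 0)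
          = (Set.Ici (X ω)).indicator (fun _ => X ω) := by
        ext t; by_cases h : X ω ≤ t <;> simp [Set.indicator, h]
      rw [h1, hν, integrable_indicator_iff measurableSet_Ici, IntegrableOn,
        Measure.restrict_restrict measurableSet_Ici]
      refine integrableOn_const ?_ enorm_ne_top
      rw [Set.Ici_inter_Iic, Real.volume_Icc]
      exact ENNReal.ofReal_ne_top
    · have heq : (fun ω => ∫ t, ‖if X ω ≤ t then X ω else 0‖ ∂ν)
          = fun ω => |X ω| * max (s - X ω) 0 := by
        funext ω
        have h3 : (fun t : ℝ => ‖if X ω ≤ t then X ω else 0‖)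
            = fun t => if X ω ≤ t then |X ω| else 0 := by
          funext t; by_cases h : X ω ≤ t <;> simp [h]
        rw [hν]
        simp only [h3]
        exact helper_val s (X ω) |X ω|
      rw [heq]
      have hg : Integrable (fun ω => |s| * |X ω| + X ω ^ 2) μ :=
        (hX1.abs.const_mul |s|).add hX2
      apply hg.mono
      · exact ((hXmeas.abs).mul ((measurable_const.sub hXmeas).max
          measurable_const)).aestronglyMeasurable
      · filter_upwards with ω
        have hx : (0:ℝ) ≤ |X ω| := abs_nonneg _
        have hs := le_abs_self s
        have hns := neg_abs_le (X ω)
        have h4 : |X ω| ^ 2 = X ω ^ 2 := sq_abs _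
        have hmax : max (s - X ω) 0 ≤ |s| + |X ω| := max_le (by linarith) (by positivity)
        have h5 : |X ω| * max (s - X ω) 0 ≤ |s| * |X ω| + X ω ^ 2 := by nlinarith
        calc ‖|X ω| * max (s - X ω) 0‖ = |X ω| * max (s - X ω) 0 := by
              rw [Real.norm_eq_abs, abs_of_nonneg (mul_nonneg hx (le_max_right _ _))]
          _ ≤ |s| * |X ω| + X ω ^ 2 := h5
          _ ≤ ‖|s| * |X ω| + X ω ^ 2‖ := by rw [Real.norm_eq_abs]; exact le_abs_self _
  have hswap := integral_integral_swap
    (f := fun t ω => if X ω ≤ t then X ω else 0) (ν := μ) (μ := ν) hInt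
  rw [hswap, ← integral_neg]
  apply integral_congr_ae
  filter_upwards with ω
  rw [hν]
  rw [helper_val s (X ω) (X ω)]
  by_cases h : X ω ≤ s
  · rw [if_pos h, max_eq_left (by linarith)]; ring
  · rw [if_neg h, max_eq_right (by linarith)]; ring
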